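/- Let 3 ≤ k ≤ m with k = m or k odd, and let U ⊆ V be a complex subspace. If z(U) is contained in E_{n-k-3,k-3} and z(U) is isotropic with respect to β_C^{n-k-3,k-3}, then U is contained in E_{n-k-1,k-1} and U is isotropic with respect to β_C^{n-k-1,k-1}. -/

import Mathlib

noncomputable section
namespace Spr

/-! ### Linear algebra setup -/

abbrev Vsp (N : ℕ) := EuclideanSpace ℂ (Fin (2*N))
abbrev C2 := EuclideanSpace ℂ (Fin 2)

/-- The basis vector `e_i` (1-based index). -/
def eVec (N i : ℕ) : Vsp N :=
  if h : 1 ≤ i ∧ i ≤ N then EuclideanSpace.single (⟨i-1, by omega⟩ : Fin (2*N)) 1 else 0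

/-- The basis vector `f_i` (1-based index). -/
def fVec (N i : ℕ) : Vsp N :=
  if h : 1 ≤ i ∧ i ≤ N then EuclideanSpace.single (⟨N+i-1, by omega⟩ : Fin (2*N)) 1 else 0

/-- The standard basis vector `e` of `ℂ²`. -/
def eStd : C2 := EuclideanSpace.single 0 1
/-- The standard basis vector `f` of `ℂ²`. -/
def fStd : C2 := EuclideanSpace.single 1 1

/-- The nilpotent endomorphism `z` with two equal Jordan blocks:
`z e_1 = 0 = z f_1`, `z e_{i+1} = e_i`, `z f_{i+1} = f_i`. -/
def zMap (N : ℕ) : Vsp N →ₗ[ℂ] Vsp N where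
  toFun v := WithLp.toLp 2 (fun (j : Fin (2*N)) => if h : j.val + 1 < 2*N ∧ j.val + 1 ≠ N then v ⟨j.val+1, h.1⟩ else 0)
  map_add' v w := by
    ext j
    by_cases h : j.val + 1 < 2*N ∧ j.val + 1 ≠ N <;> simp [h, PiLp.add_apply]
  map_smul' c v := by
    ext j
    by_cases h : j.val + 1 < 2*N ∧ j.val + 1 ≠ N <;> simp [h, PiLp.smul_apply]

def cIdx (N : ℕ) (j : Fin 2) (i : Fin N) : Fin (2*N) :=
  ⟨if j.val = 0 then i.val else N + i.val, by have := i.isLt; split <;> omega⟩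

/-- The linear map `C : ℂ^{2N} → ℂ²`, `e_i ↦ e`, `f_i ↦ f`. -/
def Cmap (N : ℕ) : Vsp N →ₗ[ℂ] C2 where
  toFun v := WithLp.toLp 2 (fun j => ∑ i : Fin N, v (cIdx N j i))
  map_add' v w := by
    ext j
    simp [PiLp.add_apply, Finset.sum_add_distrib]
  map_smul' c v := by
    ext j
    simp [PiLp.smul_apply, Finset.mul_sum]

/-- The subspace `E_{a,b} = span(e_1,…,e_a,f_1,…,f_b)`. -/
def Esub (N a b : ℕ) : Submodule ℂ (Vsp N) :=
  Submodule.span ℂ ((eVec N '' Set.Icc 1 a) ∪ (fVec N '' Set.Icc 1 b))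

/-- Gram coefficients of the symmetric bilinear form `β_D^{2m-k,k}`. -/
def cD (N m k : ℕ) (p q : Fin (2*N)) : ℂ :=
  if k = m then
    (if p.val < N ∧ N ≤ q.val then
      (if (p.val + 1) + (q.val - N + 1) = k + 1 then (-1:ℂ)^(q.val - N) else 0)
    else if N ≤ p.val ∧ q.val < N then
      (if (p.val - N + 1) + (q.val + 1) = k + 1 then (-1:ℂ)^(p.val - N) else 0)
    else 0)
  else
    (if p.val < N ∧ q.val < N then
      (if (p.val + 1) + (q.val + 1) = 2*m - k + 1 then (-1:ℂ)^(p.val) else 0)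
    else if N ≤ p.val ∧ N ≤ q.val then
      (if (p.val - N + 1) + (q.val - N + 1) = k + 1 then (-1:ℂ)^(p.val - N + 1) else 0)
    else 0)

/-- Gram coefficients of the symplectic bilinear form `β_C^{2m-k-1,k-1}`. -/
def cC (N m k : ℕ) (p q : Fin (2*N)) : ℂ :=
  if k = m then
    (if N ≤ p.val ∧ q.val < N then
      (if (p.val - N + 1) + (q.val + 1) = k then (-1:ℂ)^(p.val - N) else 0)
    else if p.val < N ∧ N ≤ q.val then
      (if (p.val + 1) + (q.val - N + 1) = k then -(-1:ℂ)^(q.val - N) else 0)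
    else 0)
  else
    (if p.val < N ∧ q.val < N then
      (if (p.val + 1) + (q.val + 1) = 2*m - k ∧ p.val < q.val then (-1:ℂ)^(p.val + 1)
       else if (p.val + 1) + (q.val + 1) = 2*m - k ∧ q.val < p.val then (-1:ℂ)^(p.val)
       else 0)
    else if N ≤ p.val ∧ N ≤ q.val then
      (if (p.val - N + 1) + (q.val - N + 1) = k ∧ p.val < q.val then (-1:ℂ)^(p.val - N)
       else if (p.val - N + 1) + (q.val - N + 1) = k ∧ q.val < p.val then (-1:ℂ)^(p.val - N + 1)
       else 0)
    else 0)

/-- The bilinear pairing associated to a matrix `c` of coefficients. -/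
def bFormFun (N : ℕ) (c : Fin (2*N) → Fin (2*N) → ℂ) (v w : Vsp N) : ℂ :=
  ∑ p : Fin (2*N), ∑ q : Fin (2*N), v p * (c p q * w q)

/-- The symmetric bilinear form `β_D^{2m-k,k}` (extended by zero to all of `ℂ^{2N}`). -/
def betaD (N m k : ℕ) : Vsp N → Vsp N → ℂ := bFormFun N (cD N m k)

/-- The symplectic bilinear form `β_C^{2m-k-1,k-1}` (extended by zero to all of `ℂ^{2N}`). -/
def betaC (N m k : ℕ) : Vsp N → Vsp N → ℂ := bFormFun N (cC N m k)

/-- A subspace is isotropic with respect to a bilinear form. -/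
def IsIsotropic {N : ℕ} (B : Vsp N → Vsp N → ℂ) (W : Submodule ℂ (Vsp N)) : Prop :=
  ∀ v ∈ W, ∀ w ∈ W, B v w = 0

lemma bFormFun_add_left {N : ℕ} (c : Fin (2*N) → Fin (2*N) → ℂ) (v v' w : Vsp N) :
    bFormFun N c (v + v') w = bFormFun N c v w + bFormFun N c v' w := by
  simp [bFormFun, PiLp.add_apply, add_mul, Finset.sum_add_distrib]

lemma bFormFun_smul_left {N : ℕ} (c : Fin (2*N) → Fin (2*N) → ℂ) (s : ℂ) (v w : Vsp N) :
    bFormFun N c (s • v) w = s * bFormFun N c v w := by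
  simp [bFormFun, PiLp.smul_apply, smul_eq_mul, mul_assoc, Finset.mul_sum]

lemma bFormFun_zero_left {N : ℕ} (c : Fin (2*N) → Fin (2*N) → ℂ) (w : Vsp N) :
    bFormFun N c 0 w = 0 := by
  simp [bFormFun]

/-- `{v ∈ E | ∀ w ∈ F, B(v,w) = 0}` for the bilinear form with coefficients `c`. -/
def perpB (N : ℕ) (c : Fin (2*N) → Fin (2*N) → ℂ) (E F : Submodule ℂ (Vsp N)) :
    Submodule ℂ (Vsp N) where
  carrier := {v | v ∈ E ∧ ∀ w ∈ F, bFormFun N c v w = 0}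
  add_mem' := by
    rintro x y ⟨hxE, hx⟩ ⟨hyE, hy⟩
    exact ⟨E.add_mem hxE hyE, fun w hw => by
      rw [bFormFun_add_left, hx w hw, hy w hw, add_zero]⟩
  zero_mem' := ⟨E.zero_mem, fun w hw => bFormFun_zero_left c w⟩
  smul_mem' := by
    rintro s x ⟨hxE, hx⟩
    exact ⟨E.smul_mem s hxE, fun w hw => by
      rw [bFormFun_smul_left, hx w hw, mul_zero]⟩

/-- `F^{⊥_D}`, the orthogonal of `F` inside `E_{2m-k,k}` with respect to `β_D`. -/
def perpD (N m k : ℕ) (F : Submodule ℂ (Vsp N)) : Submodule ℂ (Vsp N) :=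
  perpB N (cD N m k) (Esub N (2*m-k) k) F

/-- `F^{⊥_C}`, the orthogonal of `F` inside `E_{2m-k-1,k-1}` with respect to `β_C`. -/
def perpC (N m k : ℕ) (F : Submodule ℂ (Vsp N)) : Submodule ℂ (Vsp N) :=
  perpB N (cC N m k) (Esub N (2*m-k-1) (k-1)) F

/-- Membership in the Cautis–Kamnitzer variety `Y`: a flag `F_0 ⊆ F_1 ⊆ … ⊆ F_{len-1}` with
`F_0 = 0`, `dim F_i = i`, and `z F_i ⊆ F_{i-1}`. -/
def InY (N len : ℕ) (F : Fin len → Submodule ℂ (Vsp N)) : Prop :=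
  (∀ i : Fin len, i.val = 0 → F i = ⊥) ∧
  ∀ i j : Fin len, j.val = i.val + 1 →
    Module.finrank ℂ ↥(F j) = j.val ∧ F i ≤ F j ∧
      Submodule.map (zMap N) (F j) ≤ F i

/-- Membership in the embedded type `D` Springer fiber `Fl^{2m-k,k}_D ⊆ Y_m`. -/
def InFlD (N m k : ℕ) (F : Fin (m+1) → Submodule ℂ (Vsp N)) : Prop :=
  InY N (m+1) F ∧ F (Fin.last m) ≤ Esub N (2*m-k) k ∧
    IsIsotropic (betaD N m k) (F (Fin.last m))

/-- Membership in the embedded type `C` Springer fiber `Fl^{2m-k-1,k-1}_C ⊆ Y_{m-1}`;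
here `G : Fin m → _` is the flag `(G_0,…,G_{m-1})`. -/
def InFlC (N m k : ℕ) (G : Fin m → Submodule ℂ (Vsp N)) : Prop :=
  InY N m G ∧ ∀ i : Fin m, i.val = m - 1 →
    G i ≤ Esub N (2*m-k-1) (k-1) ∧ IsIsotropic (betaC N m k) (G i)

/-! ### Cup diagrams -/

/-- A (dotted) cup diagram on the vertices `{1,…,m}`. -/
structure CupDiagram (m : ℕ) where
  cups : Finset (ℕ × ℕ)
  dottedCups : Finset (ℕ × ℕ)
  dottedRays : Finset ℕ
  cups_valid : ∀ p ∈ cups, 1 ≤ p.1 ∧ p.1 < p.2 ∧ p.2 ≤ m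
  cups_disjoint : ∀ p ∈ cups, ∀ q ∈ cups, p ≠ q →
    p.1 ≠ q.1 ∧ p.1 ≠ q.2 ∧ p.2 ≠ q.1 ∧ p.2 ≠ q.2
  noncrossing : ∀ p ∈ cups, ∀ l, p.1 < l → l < p.2 →
    ∃ q ∈ cups, (l = q.1 ∨ l = q.2) ∧ p.1 < q.1 ∧ q.2 < p.2
  dottedCups_sub : dottedCups ⊆ cups
  dottedRays_valid : ∀ r ∈ dottedRays, 1 ≤ r ∧ r ≤ m ∧ ∀ p ∈ cups, r ≠ p.1 ∧ r ≠ p.2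
  dottedCups_cond : ∀ p ∈ dottedCups,
    (∀ q ∈ cups, ¬(q.1 < p.1 ∧ p.2 < q.2)) ∧
    (∀ r, p.2 < r → r ≤ m → ∃ q ∈ cups, r = q.1 ∨ r = q.2)
  dottedRays_cond : ∀ r ∈ dottedRays, ∀ r', r < r' → r' ≤ m →
    ∃ q ∈ cups, r' = q.1 ∨ r' = q.2

/-- The vertex `v` carries a ray of the cup diagram `a`. -/
def CupDiagram.HasRay {m : ℕ} (a : CupDiagram m) (v : ℕ) : Prop :=
  1 ≤ v ∧ v ≤ m ∧ ∀ p ∈ a.cups, v ≠ p.1 ∧ v ≠ p.2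

/-- The total number of dots of a cup diagram. -/
def CupDiagram.dots {m : ℕ} (a : CupDiagram m) : ℕ :=
  a.dottedCups.card + a.dottedRays.card

/-! ### The sets `T_a ⊆ (ℙ¹)^m` -/

/-- The subset `T_a ⊆ (ℙ¹)^m` attached to a cup diagram `a ∈ B^{2m-k,k}`
(tuples are `0`-indexed: the coordinate `l i` corresponds to the vertex `i+1`). -/
def Ta (m k : ℕ) (a : CupDiagram m) : Set (Fin m → Submodule ℂ C2) :=
  {l | (∀ i : Fin m, Module.finrank ℂ ↥(l i) = 1) ∧
       (∀ i j : Fin m, (i.val+1, j.val+1) ∈ a.cups → (i.val+1, j.val+1) ∉ a.dottedCups →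
          l j = (l i)ᗮ) ∧
       (∀ i j : Fin m, (i.val+1, j.val+1) ∈ a.dottedCups → l i = l j) ∧
       (if k = m then
          ∀ i : Fin m, a.HasRay (i.val+1) →
            (i.val+1 ∉ a.dottedRays → l i = Submodule.span ℂ {fStd}) ∧
            (i.val+1 ∈ a.dottedRays → l i = Submodule.span ℂ {eStd})
        else
          ∀ i : Fin m, a.HasRay (i.val+1) →
            ((∃ r, a.HasRay r ∧ i.val+1 < r) → l i = Submodule.span ℂ {eStd}) ∧
            ((∀ r, a.HasRay r → r ≤ i.val+1) →
              l i = Submodule.span ℂ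
                {(if (m-k) % 2 = 0 then (1:ℂ) else Complex.I) • eStd +
                 (if i.val+1 ∈ a.dottedRays then (1:ℂ) else (-1:ℂ)) • fStd}))}

/-- The compatibility `C(F_{i} ∩ F_{i-1}^⊥) = l_i` for all `1 ≤ i ≤ m`. -/
def Compat (N m : ℕ) (F : Fin (m+1) → Submodule ℂ (Vsp N))
    (l : Fin m → Submodule ℂ C2) : Prop :=
  ∀ i : Fin m, Submodule.map (Cmap N) (F i.succ ⊓ (F i.castSucc)ᗮ) = l i

/-! ### Spheres and the topological Springer fiber -/

abbrev E3 := EuclideanSpace ℝ (Fin 3)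
abbrev Sph : Type := ↥(Metric.sphere (0 : E3) 1)

/-- The point `p = (0,0,1)`. -/
def pPt : E3 := EuclideanSpace.single 2 1
/-- The point `q = (1,0,0)`. -/
def qPt : E3 := EuclideanSpace.single 0 1

/-- The submanifold `S_a ⊆ (S²)^m` attached to a cup diagram `a`
(tuples are `0`-indexed: the coordinate `x i` corresponds to the vertex `i+1`). -/
def Sa (m : ℕ) (a : CupDiagram m) : Set (Fin m → Sph) :=
  {x | (∀ i j : Fin m, (i.val+1, j.val+1) ∈ a.cups →
          ((i.val+1, j.val+1) ∉ a.dottedCups → (x i : E3) = -(x j : E3)) ∧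
          ((i.val+1, j.val+1) ∈ a.dottedCups → (x i : E3) = (x j : E3))) ∧
       (∀ i : Fin m, a.HasRay (i.val+1) →
          (i.val+1 ∈ a.dottedRays → (x i : E3) = pPt) ∧
          (i.val+1 ∉ a.dottedRays →
            ((∀ r, a.HasRay r → r ≤ i.val+1) → (x i : E3) = -pPt) ∧
            ((∃ r, a.HasRay r ∧ i.val+1 < r) → (x i : E3) = qPt)))}

/-! ### Circle diagrams -/

/-- The edge relation of the circle diagram `\bar a b`. -/
def EdgeRel (m : ℕ) (a b : CupDiagram m) (i j : ℕ) : Prop :=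
  (i, j) ∈ a.cups ∨ (j, i) ∈ a.cups ∨ (i, j) ∈ b.cups ∨ (j, i) ∈ b.cups

/-- Two vertices lie in the same connected component of the circle diagram. -/
def Reach (m : ℕ) (a b : CupDiagram m) : ℕ → ℕ → Prop :=
  Relation.ReflTransGen (EdgeRel m a b)

/-- The number of dots on the connected component of the vertex `v` in the
circle diagram `\bar a b`. -/
def compDots (m : ℕ) (a b : CupDiagram m) (v : ℕ) : ℕ :=
  {p : ℕ × ℕ | p ∈ a.dottedCups ∧ Reach m a b v p.1 ∧ Reach m a b v p.2}.ncard +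
  {p : ℕ × ℕ | p ∈ b.dottedCups ∧ Reach m a b v p.1 ∧ Reach m a b v p.2}.ncard +
  {r : ℕ | r ∈ a.dottedRays ∧ Reach m a b v r}.ncard +
  {r : ℕ | r ∈ b.dottedRays ∧ Reach m a b v r}.ncard

/-- The connected component of `v` in the circle diagram is closed, i.e. none of
its vertices carries a ray of `a` or of `b`. -/
def IsClosedCompAt (m : ℕ) (a b : CupDiagram m) (v : ℕ) : Prop :=
  ∀ w, Reach m a b v w → ¬ a.HasRay w ∧ ¬ b.HasRay w

/-- The number of closed connected components of the circle diagram `\bar a b`. -/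
def numClosed (m : ℕ) (a b : CupDiagram m) : ℕ :=
  {s : Set ℕ | ∃ v, 1 ≤ v ∧ v ≤ m ∧ IsClosedCompAt m a b v ∧
      s = {w | Reach m a b v w}}.ncard

/-! ### The diffeomorphism `γ_{n-k,k}` -/

/-- Stereographic projection `S² \ {p} → ℂ`. -/
def sigmaProj (v : E3) : ℂ :=
  Complex.ofReal (v 0 / (1 - v 2)) + Complex.I * Complex.ofReal (v 1 / (1 - v 2))

open scoped Classical in
/-- The map `γ : S² → ℙ¹` (extended to the ambient space `ℝ³`). -/
def gammaAmb (v : E3) : Submodule ℂ C2 :=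
  if v = pPt then Submodule.span ℂ {eStd}
  else Submodule.span ℂ {sigmaProj v • eStd + fStd}

/-- The coordinate swap `s(x,y,z) = (x,z,y)`. -/
def sSwap (v : E3) : E3 := WithLp.toLp 2 (fun (j : Fin 3) => v (if j.val = 1 then (2 : Fin 3) else if j.val = 2 then 1 else 0))
/-- The coordinate swap `t(x,y,z) = (z,y,x)`. -/
def tSwap (v : E3) : E3 := WithLp.toLp 2 (fun (j : Fin 3) => v (if j.val = 0 then (2 : Fin 3) else if j.val = 2 then 0 else 1))

/-- The diffeomorphism `γ_{n-k,k} : (S²)^m → (ℙ¹)^m`. -/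
def gammaNK (m k : ℕ) (x : Fin m → Sph) : Fin m → Submodule ℂ C2 := fun i =>
  if k = m then gammaAmb (x i)
  else if (m - k) % 2 = 1 then gammaAmb (tSwap (x i))
  else gammaAmb (sSwap (x i))

/-! ### Jordan types and special simultaneous Jordan systems -/

/-- The nilpotent endomorphism induced by `z` on the subquotient `W/F` has Jordan type
`(a,b)`, encoded via the dimensions of the kernels of its powers:
`dim ker((z̄)^j) = min(j,a) + min(j,b)` for all `j`. -/
def HasJordanTypeOn (N : ℕ) (W F : Submodule ℂ (Vsp N)) (a b : ℕ) : Prop :=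
  ∀ j : ℕ, Module.finrank ℂ ↥(W ⊓ Submodule.comap (zMap N ^ j) F)
    = min j a + min j b + Module.finrank ℂ ↥F

/-- A special simultaneous Jordan system at level `i` for the subspace `Fi = F_i`
(Definition of Ehrig–Stroppel–Wilbert, Definition 4.4 of the paper). -/
def SpecialSJS (N m k : ℕ) (Fi : Submodule ℂ (Vsp N)) (i : ℕ) (ev fv : ℕ → Vsp N) : Prop :=
  (∀ j, 1 ≤ j → j + 1 ≤ m - i → zMap N (ev (j+1)) = ev j ∧ zMap N (fv (j+1)) = fv j) ∧
  (zMap N (ev 1) ∈ Fi ∧ zMap N (fv 1) ∈ Fi) ∧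
  (∀ j, 1 ≤ j → j ≤ m - i → ev j ∈ perpD N m k Fi ∧ fv j ∈ perpD N m k Fi) ∧
  (∀ j, 1 ≤ j → j ≤ m - i - 1 → ev j ∈ perpC N m k Fi ∧ fv j ∈ perpC N m k Fi) ∧
  LinearIndependent ℂ (fun s : Fin (m-i) ⊕ Fin (m-i) =>
    (Submodule.Quotient.mk (Sum.elim (fun t => ev (t.val+1)) (fun t => fv (t.val+1)) s) :
      Vsp N ⧸ Fi)) ∧
  (perpD N m k Fi
     = Fi ⊔ Submodule.span ℂ ((ev '' Set.Icc 1 (m-i)) ∪ (fv '' Set.Icc 1 (m-i)))) ∧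
  (perpC N m k Fi
     = Fi ⊔ Submodule.span ℂ ((ev '' Set.Icc 1 (m-i-1)) ∪ (fv '' Set.Icc 1 (m-i-1)))) ∧
  (∀ j j', 1 ≤ j → j ≤ m-i → 1 ≤ j' → j' ≤ m-i →
      betaD N m k (fv j) (ev j') = (if j + j' = m - i + 1 then (-1:ℂ)^(j-1) else 0) ∧
      betaD N m k (ev j) (ev j') = 0 ∧ betaD N m k (fv j) (fv j') = 0) ∧
  (∀ j j', 1 ≤ j → j ≤ m-i-1 → 1 ≤ j' → j' ≤ m-i-1 →
      betaC N m k (fv j) (ev j') = (if j + j' = m - i then (-1:ℂ)^(j-1) else 0) ∧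
      betaC N m k (ev j') (fv j) = -(if j + j' = m - i then (-1:ℂ)^(j-1) else 0) ∧
      betaC N m k (ev j) (ev j') = 0 ∧ betaC N m k (fv j) (fv j') = 0) ∧
  (∀ j j', 1 ≤ j → j ≤ m-i → 1 ≤ j' → j' ≤ m-i →
      (inner ℂ (ev j) (ev j') : ℂ) = (if j = j' then 1 else 0) ∧
      (inner ℂ (fv j) (fv j') : ℂ) = (if j = j' then 1 else 0) ∧
      (inner ℂ (ev j) (fv j') : ℂ) = 0) ∧
  (∀ j, 1 ≤ j → j ≤ m-i → ev j ∈ Fiᗮ ∧ fv j ∈ Fiᗮ) ∧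
  (∀ j, 2 ≤ j → j ≤ m-i → Cmap N (ev j) = Cmap N (zMap N (ev j)) ∧
      Cmap N (fv j) = Cmap N (zMap N (fv j)))

/-! ### Auxiliary machinery for statement 12 -/

def Van (N a b : ℕ) (v : Vsp N) : Prop :=
  ∀ p : Fin (2*N), ((a ≤ p.val ∧ p.val < N) ∨ N + b ≤ p.val) → v p = 0

lemma mem_Esub_of_van (N a b : ℕ) (v : Vsp N) (hv : Van N a b v) : v ∈ Esub N a b := by
  have hrep : v = ∑ p : Fin (2*N), v p • (EuclideanSpace.single p (1:ℂ) : Vsp N) := by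
    ext j
    have : (∑ p : Fin (2*N), v p • (EuclideanSpace.single p (1:ℂ) : Vsp N)) j
        = ∑ p : Fin (2*N), v p * (if j = p then (1:ℂ) else 0) := by
      rw [WithLp.ofLp_sum, Finset.sum_apply]
      exact Finset.sum_congr rfl fun p _ => by
        rw [PiLp.smul_apply, EuclideanSpace.single_apply, smul_eq_mul]
    rw [this]
    simp [Finset.sum_ite_eq]
  rw [hrep]
  apply Submodule.sum_mem
  intro p _
  have hlt := p.isLt
  by_cases hbad : (a ≤ p.val ∧ p.val < N) ∨ N + b ≤ p.val
  · rw [hv p hbad, zero_smul]; exact Submodule.zero_mem _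
  · apply Submodule.smul_mem
    apply Submodule.subset_span
    by_cases hpN : p.val < N
    · left
      refine ⟨p.val + 1, ⟨by omega, by omega⟩, ?_⟩
      unfold eVec
      rw [dif_pos ⟨by omega, by omega⟩]
      congr 1
    · right
      refine ⟨p.val - N + 1, ⟨by omega, by omega⟩, ?_⟩
      unfold fVec
      rw [dif_pos (show 1 ≤ p.val - N + 1 ∧ p.val - N + 1 ≤ N by omega)]
      have hidx : (⟨N + (p.val - N + 1) - 1, by omega⟩ : Fin (2*N)) = p :=
        Fin.ext (by simp; omega)
      rw [hidx]

lemma negA (a b : ℕ) (h : a = b + 1) : (-1:ℂ)^a = -(-1:ℂ)^b := by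
  subst h; rw [pow_succ]; ring

lemma negB (a b : ℕ) (h : a = b + 1) : -(-1:ℂ)^a = -(-(-1:ℂ)^b) := by
  rw [negA a b h]

set_option maxHeartbeats 2000000 in
lemma cC_shift (N m k : ℕ) (hm : 3 ≤ m) (hk1 : 3 ≤ k) (hk2 : k ≤ m)
    (p q : Fin (2*N)) (hp : 1 ≤ p.val) (hpN : p.val ≠ N) (hq : 1 ≤ q.val) (hqN : q.val ≠ N) :
    cC N m k p q
      = - cC N (m-2) (k-2) ⟨p.val - 1, by have := p.isLt; omega⟩
          ⟨q.val - 1, by have := q.isLt; omega⟩ := by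
  have hp2 := p.isLt
  have hq2 := q.isLt
  simp only [cC]
  by_cases hkm : k = m
  · rw [if_pos hkm, if_pos (show k - 2 = m - 2 by omega)]
    split_ifs <;>
      first
        | rfl
        | (exfalso; omega)
        | exact neg_zero.symm
        | exact negA _ _ (by omega)
        | exact negB _ _ (by omega)
  · rw [if_neg hkm, if_neg (show ¬ (k - 2 = m - 2) by omega)]
    split_ifs <;>
      first
        | rfl
        | (exfalso; omega)
        | exact neg_zero.symm
        | exact negA _ _ (by omega)
        | exact negB _ _ (by omega)

lemma term_bdry (N m k : ℕ) (hm : 3 ≤ m) (hk1 : 3 ≤ k) (hk2 : k ≤ m)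
    (u u' : Vsp N) (hu : Van N (2*m-k-2) (k-2) u) (hu' : Van N (2*m-k-2) (k-2) u')
    (p q : Fin (2*N)) (hpq : p.val = 0 ∨ p.val = N ∨ q.val = 0 ∨ q.val = N) :
    u p * (cC N m k p q * u' q) = 0 := by
  have hp2 := p.isLt
  have hq2 := q.isLt
  have hsplit : cC N m k p q = 0
      ∨ ((2*m-k-2 ≤ p.val ∧ p.val < N) ∨ N + (k-2) ≤ p.val)
      ∨ ((2*m-k-2 ≤ q.val ∧ q.val < N) ∨ N + (k-2) ≤ q.val) := by
    simp only [cC]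
    split_ifs <;> first | (left; rfl) | (right; omega)
  rcases hsplit with h | h | h
  · rw [h, zero_mul, mul_zero]
  · rw [hu p h, zero_mul]
  · rw [hu' q h, mul_zero, mul_zero]

lemma shift_sum (N : ℕ) (hN : 1 ≤ N) (F : Fin (2*N) → ℂ)
    (hF : ∀ r : Fin (2*N), r.val = N - 1 ∨ r.val = 2*N - 1 → F r = 0) :
    ∑ p : Fin (2*N), (if 1 ≤ p.val ∧ p.val ≠ N
        then F ⟨p.val - 1, by have := p.isLt; omega⟩ else 0)
      = ∑ r, F r := by
  classical
  set G : ℕ → ℂ := fun v => if h : v < 2*N then F ⟨v, h⟩ else 0 with hGdef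
  set H : ℕ → ℂ := fun v => if 1 ≤ v ∧ v ≠ N then G (v-1) else 0 with hHdef
  have hG : ∀ p : Fin (2*N), F p = G p.val := by
    intro p
    simp only [hGdef, p.isLt, dif_pos]
  have hL : ∀ p : Fin (2*N),
      (if 1 ≤ p.val ∧ p.val ≠ N
        then F ⟨p.val - 1, by have := p.isLt; omega⟩ else 0) = H p.val := by
    intro p
    have hlt := p.isLt
    simp only [hHdef, hGdef]
    by_cases h : 1 ≤ p.val ∧ p.val ≠ N
    · rw [if_pos h, if_pos h, dif_pos (show p.val - 1 < 2*N by omega)]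
    · rw [if_neg h, if_neg h]
  calc ∑ p : Fin (2*N), (if 1 ≤ p.val ∧ p.val ≠ N
        then F ⟨p.val - 1, by have := p.isLt; omega⟩ else 0)
      = ∑ p : Fin (2*N), H p.val := Finset.sum_congr rfl fun p _ => hL p
    _ = ∑ v ∈ Finset.range (2*N), H v := Fin.sum_univ_eq_sum_range H (2*N)
    _ = ∑ v ∈ Finset.range (2*N), G v := by
        rw [show 2*N = (2*N-1) + 1 by omega]
        rw [Finset.sum_range_succ' H (2*N-1), Finset.sum_range_succ G (2*N-1)]
        have hH0 : H 0 = 0 := by simp [hHdef]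
        have hGM : G (2*N-1) = 0 := by
          simp only [hGdef, dif_pos (show 2*N-1 < 2*N by omega)]
          exact hF _ (Or.inr rfl)
        rw [hH0, hGM, add_zero, add_zero]
        apply Finset.sum_congr rfl
        intro v hv
        rw [Finset.mem_range] at hv
        simp only [hHdef, hGdef]
        by_cases hvN : v + 1 = N
        · rw [if_neg (by omega), dif_pos (show v < 2*N by omega)]
          exact (hF _ (Or.inl (by simp; omega))).symm
        · rw [if_pos ⟨by omega, hvN⟩]
          rfl
    _ = ∑ p : Fin (2*N), G p.val := (Fin.sum_univ_eq_sum_range G (2*N)).symm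
    _ = ∑ r, F r := Finset.sum_congr rfl fun p _ => (hG p).symm

lemma zMap_apply (N : ℕ) (v : Vsp N) (j : Fin (2*N)) :
    zMap N v j = if h : j.val + 1 < 2*N ∧ j.val + 1 ≠ N then v ⟨j.val+1, h.1⟩ else 0 := by
  simp only [zMap, LinearMap.coe_mk, AddHom.coe_mk, PiLp.toLp_apply]

lemma zMap_coord_zero (N : ℕ) (w : Vsp N) (s : Fin (2*N))
    (hs : s.val = N - 1 ∨ s.val = 2*N - 1) : zMap N w s = 0 := by
  have h := s.isLt
  rw [zMap_apply, dif_neg (by omega)]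

lemma van_pred (N a b : ℕ) (u : Vsp N) (h : Van N a b (zMap N u))
    (p : Fin (2*N)) (hp : (a + 1 ≤ p.val ∧ p.val < N) ∨ N + b + 1 ≤ p.val) : u p = 0 := by
  have h2N := p.isLt
  have hc : (p.val - 1) + 1 < 2*N ∧ (p.val - 1) + 1 ≠ N := by omega
  have key : u p = zMap N u ⟨p.val - 1, by omega⟩ := by
    rw [zMap_apply]
    rw [dif_pos hc]
    exact congrArg (fun i => u i) (Fin.ext (show p.val = p.val - 1 + 1 by omega))
  rw [key]
  exact h _ (by simp; omega)

lemma betaC_shift (N m k : ℕ) (hm : 3 ≤ m) (hk1 : 3 ≤ k) (hk2 : k ≤ m) (hN : m < N)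
    (u u' : Vsp N) (hu : Van N (2*m-k-3) (k-3) (zMap N u))
    (hu' : Van N (2*m-k-3) (k-3) (zMap N u')) :
    betaC N m k u u' = - betaC N (m-2) (k-2) (zMap N u) (zMap N u') := by
  have hN1 : 1 ≤ N := by omega
  have huV : Van N (2*m-k-2) (k-2) u := fun p hp => van_pred N (2*m-k-3) (k-3) u hu p (by omega)
  have huV' : Van N (2*m-k-2) (k-2) u' := fun p hp => van_pred N (2*m-k-3) (k-3) u' hu' p (by omega)
  show bFormFun N (cC N m k) u u' = - bFormFun N (cC N (m-2) (k-2)) (zMap N u) (zMap N u')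
  unfold bFormFun
  have step1 : ∀ p q : Fin (2*N), u p * (cC N m k p q * u' q)
      = -(if 1 ≤ p.val ∧ p.val ≠ N then
            (if 1 ≤ q.val ∧ q.val ≠ N then
              zMap N u ⟨p.val - 1, by have := p.isLt; omega⟩ *
                (cC N (m-2) (k-2) ⟨p.val - 1, by have := p.isLt; omega⟩
                    ⟨q.val - 1, by have := q.isLt; omega⟩ *
                  zMap N u' ⟨q.val - 1, by have := q.isLt; omega⟩)
             else 0)
           else 0) := by
    intro p q
    have hp2 := p.isLt
    have hq2 := q.isLt
    by_cases hp : 1 ≤ p.val ∧ p.val ≠ N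
    · by_cases hq : 1 ≤ q.val ∧ q.val ≠ N
      · rw [if_pos hp, if_pos hq]
        have hzu : zMap N u ⟨p.val - 1, by omega⟩ = u p := by
          rw [zMap_apply]
          rw [dif_pos (show (p.val - 1) + 1 < 2*N ∧ (p.val - 1) + 1 ≠ N by omega)]
          exact congrArg (fun i => u i) (Fin.ext (show p.val - 1 + 1 = p.val by omega))
        have hzu' : zMap N u' ⟨q.val - 1, by omega⟩ = u' q := by
          rw [zMap_apply]
          rw [dif_pos (show (q.val - 1) + 1 < 2*N ∧ (q.val - 1) + 1 ≠ N by omega)]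
          exact congrArg (fun i => u' i) (Fin.ext (show q.val - 1 + 1 = q.val by omega))
        rw [hzu, hzu', cC_shift N m k hm hk1 hk2 p q hp.1 hp.2 hq.1 hq.2]
        ring
      · rw [if_pos hp, if_neg hq, neg_zero]
        exact term_bdry N m k hm hk1 hk2 u u' huV huV' p q (by omega)
    · rw [if_neg hp, neg_zero]
      exact term_bdry N m k hm hk1 hk2 u u' huV huV' p q (by omega)
  calc ∑ p : Fin (2*N), ∑ q : Fin (2*N), u p * (cC N m k p q * u' q)
      = ∑ p : Fin (2*N), ∑ q : Fin (2*N),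
          -(if 1 ≤ p.val ∧ p.val ≠ N then
            (if 1 ≤ q.val ∧ q.val ≠ N then
              zMap N u ⟨p.val - 1, by have := p.isLt; omega⟩ *
                (cC N (m-2) (k-2) ⟨p.val - 1, by have := p.isLt; omega⟩
                    ⟨q.val - 1, by have := q.isLt; omega⟩ *
                  zMap N u' ⟨q.val - 1, by have := q.isLt; omega⟩)
             else 0)
           else 0) := by
        exact Finset.sum_congr rfl fun p _ => Finset.sum_congr rfl fun q _ => step1 p q
    _ = -(∑ p : Fin (2*N), ∑ q : Fin (2*N),
          (if 1 ≤ p.val ∧ p.val ≠ N then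
            (if 1 ≤ q.val ∧ q.val ≠ N then
              zMap N u ⟨p.val - 1, by have := p.isLt; omega⟩ *
                (cC N (m-2) (k-2) ⟨p.val - 1, by have := p.isLt; omega⟩
                    ⟨q.val - 1, by have := q.isLt; omega⟩ *
                  zMap N u' ⟨q.val - 1, by have := q.isLt; omega⟩)
             else 0)
           else 0)) := by
        rw [← Finset.sum_neg_distrib]
        exact Finset.sum_congr rfl fun p _ => by rw [← Finset.sum_neg_distrib]
    _ = -(∑ p : Fin (2*N), ∑ q : Fin (2*N),
          zMap N u p * (cC N (m-2) (k-2) p q * zMap N u' q)) := by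
        congr 1
        calc ∑ p : Fin (2*N), ∑ q : Fin (2*N),
            (if 1 ≤ p.val ∧ p.val ≠ N then
              (if 1 ≤ q.val ∧ q.val ≠ N then
                zMap N u ⟨p.val - 1, by have := p.isLt; omega⟩ *
                  (cC N (m-2) (k-2) ⟨p.val - 1, by have := p.isLt; omega⟩
                      ⟨q.val - 1, by have := q.isLt; omega⟩ *
                    zMap N u' ⟨q.val - 1, by have := q.isLt; omega⟩)
               else 0)
             else 0)
            = ∑ p : Fin (2*N),
                (if 1 ≤ p.val ∧ p.val ≠ N then
                  (∑ s : Fin (2*N),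
                    zMap N u ⟨p.val - 1, by have := p.isLt; omega⟩ *
                      (cC N (m-2) (k-2) ⟨p.val - 1, by have := p.isLt; omega⟩ s *
                        zMap N u' s))
                 else 0) := by
              refine Finset.sum_congr rfl fun p _ => ?_
              by_cases hp : 1 ≤ p.val ∧ p.val ≠ N
              · simp only [if_pos hp]
                exact shift_sum N hN1
                  (fun s => zMap N u ⟨p.val - 1, by have := p.isLt; omega⟩ *
                    (cC N (m-2) (k-2) ⟨p.val - 1, by have := p.isLt; omega⟩ s *
                      zMap N u' s))
                  (fun s hs => by simp [zMap_coord_zero N u' s hs])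
              · simp only [if_neg hp, Finset.sum_const_zero]
          _ = ∑ r : Fin (2*N), ∑ s : Fin (2*N),
                zMap N u r * (cC N (m-2) (k-2) r s * zMap N u' s) :=
              shift_sum N hN1
                (fun r => ∑ s : Fin (2*N), zMap N u r * (cC N (m-2) (k-2) r s * zMap N u' s))
                (fun r hr => Finset.sum_eq_zero fun s _ => by
                  simp [zMap_coord_zero N u r hr])


def vanSub (N a b : ℕ) : Submodule ℂ (Vsp N) where
  carrier := {v | Van N a b v}
  add_mem' := by
    intro x y hx hy p hp
    have hxy : (x + y) p = x p + y p := rfl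
    rw [hxy, hx p hp, hy p hp, add_zero]
  zero_mem' := fun p _ => rfl
  smul_mem' := by
    intro c x hx p hp
    have hcx : (c • x) p = c * x p := rfl
    rw [hcx, hx p hp, mul_zero]

lemma van_of_mem_Esub (N a b : ℕ) (v : Vsp N) (hv : v ∈ Esub N a b) : Van N a b v := by
  have hle : Esub N a b ≤ vanSub N a b := by
    rw [Esub, Submodule.span_le]
    rintro x (⟨i, hi, rfl⟩ | ⟨i, hi, rfl⟩) <;>
      obtain ⟨hi1, hi2⟩ := hi <;> intro p hp
    · unfold eVec
      split_ifs with h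
      · rw [EuclideanSpace.single_apply, if_neg]
        intro he
        have hpe : p.val = i - 1 := by rw [he]
        omega
      · rfl
    · unfold fVec
      split_ifs with h
      · rw [EuclideanSpace.single_apply, if_neg]
        intro he
        have hpe : p.val = N + i - 1 := by rw [he]
        omega
      · rfl
  exact hle hv

/-- If `zU ⊆ E_{n-k-3,k-3}` is isotropic with respect to
`β_C^{n-k-3,k-3}`, then `U ⊆ E_{n-k-1,k-1}` is isotropic with respect to
`β_C^{n-k-1,k-1}`. -/
theorem statement12 (m N k : ℕ) (hm : 3 ≤ m) (hN : m < N)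
    (hk1 : 3 ≤ k) (hk2 : k ≤ m) (hkadm : k = m ∨ Odd k)
    (U : Submodule ℂ (Vsp N))
    (h1 : Submodule.map (zMap N) U ≤ Esub N (2*m-k-3) (k-3))
    (h2 : IsIsotropic (betaC N (m-2) (k-2)) (Submodule.map (zMap N) U)) :
    U ≤ Esub N (2*m-k-1) (k-1) ∧ IsIsotropic (betaC N m k) U := by
  have hvz : ∀ u ∈ U, Van N (2*m-k-3) (k-3) (zMap N u) := fun u hu =>
    van_of_mem_Esub N _ _ _ (h1 (Submodule.mem_map_of_mem hu))
  constructor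
  · intro u hu
    apply mem_Esub_of_van
    intro p hp
    exact van_pred N (2*m-k-3) (k-3) u (hvz u hu) p (by have := p.isLt; omega)
  · intro u hu u' hu'
    rw [betaC_shift N m k hm hk1 hk2 hN u u' (hvz u hu) (hvz u' hu'),
      h2 _ (Submodule.mem_map_of_mem hu) _ (Submodule.mem_map_of_mem hu'), neg_zero]

end Spr
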